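/- Consider a deep linear network with weight entries sampled i.i.d. from a symmetric distribution, and two fixed inputs x_u, x_v ∈ ℝ^{n_0}. Let g^u be the gradient of the network output at input x_u with respect to the weights, and let Ĥ^v be the Hessian of the network output at input x_v with respect to the weights. Then E[(g^u)ᵀ Ĥ^v g^u] = 0. -/

import Mathlib

open MeasureTheory ProbabilityTheory

namespace DLN

/-- Parameters (weights) of an `L`-layer linear network with widths `n 0, n 1, …, n L`.
`W k j i` is the weight `w_{i j}^{k+1}` of the paper: the entry in row `j ∈ Fin (n k)`
and column `i ∈ Fin (n (k+1))` of the matrix `W^{k+1} ∈ ℝ^{n k × n (k+1)}`. -/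
abbrev Params (n : ℕ → ℕ) (L : ℕ) := (k : Fin L) → Fin (n k.1) → Fin (n (k.1 + 1)) → ℝ

/-- Weights for every layer index `k : ℕ` (used for the recursive definitions). -/
abbrev WTot (n : ℕ → ℕ) := (k : ℕ) → Fin (n k) → Fin (n (k + 1)) → ℝ

/-- Extend finitely many weight matrices by zero. -/
def ext (n : ℕ → ℕ) (L : ℕ) (W : Params n L) : WTot n :=
  fun k => if h : k < L then W ⟨k, h⟩ else 0

/-- Activations: `act n x Wt l = y^l`, with `y^0 = x` and `y^{l+1} = W^{(l+1)⊤} y^l`. -/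
def act (n : ℕ → ℕ) (x : Fin (n 0) → ℝ) (Wt : WTot n) : (l : ℕ) → Fin (n l) → ℝ
  | 0 => x
  | l + 1 => fun i => ∑ j, Wt l j i * act n x Wt l j

/-- `chain n Wt l m` is the matrix product `W^{l+1} W^{l+2} ⋯ W^{l+m} ∈ ℝ^{n l × n (l+m)}`. -/
def chain (n : ℕ → ℕ) (Wt : WTot n) (l : ℕ) : (m : ℕ) → Fin (n l) → Fin (n (l + m)) → ℝ
  | 0 => fun u j => if (u : ℕ) = (j : ℕ) then 1 else 0
  | m + 1 => fun u j => ∑ i : Fin (n (l + m)), chain n Wt l m u i * Wt (l + m) i j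

/-- `A n Wt l k u j = a_{l u}^{k j} = ∂ y_j^k / ∂ y_u^l`, the `(u,j)` entry of
`W^{l+1} ⋯ W^{k}` (and `0` for `k < l`). -/
def A (n : ℕ → ℕ) (Wt : WTot n) (l k : ℕ) (u : Fin (n l)) (j : Fin (n k)) : ℝ :=
  if h : l ≤ k then
    chain n Wt l (k - l) u (Fin.cast (congrArg n (Nat.add_sub_cancel' h).symm) j) else 0

/-- The scalar output `y^L` of the network (`n L` is assumed positive, the paper has `n L = 1`). -/
def F (n : ℕ → ℕ) (L : ℕ) (hL : 0 < n L) (x : Fin (n 0) → ℝ) (W : Params n L) : ℝ :=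
  act n x (ext n L W) L ⟨0, hL⟩

/-- The canonical basis direction corresponding to the single weight `w_{i j}^{k+1}`. -/
def basis (n : ℕ → ℕ) (L : ℕ) (k : Fin L) (j : Fin (n k.1)) (i : Fin (n (k.1 + 1))) :
    Params n L :=
  Pi.single k (Pi.single j (Pi.single i (1 : ℝ)))

/-- The gradient of `f` w.r.t. the concatenated weight vector, as an element of `Params n L`:
its `(k,j,i)` entry is the partial derivative `∂ f / ∂ w_{i j}^{k+1}`. -/
noncomputable def grad (n : ℕ → ℕ) (L : ℕ) (f : Params n L → ℝ) (W : Params n L) :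
    Params n L :=
  fun k j i => fderiv ℝ f W (basis n L k j i)

/-- The Hessian bilinear form of `f` at `W` evaluated at directions `u, v`,
i.e. `uᵀ (∇² f) v`. -/
noncomputable def hess (n : ℕ → ℕ) (L : ℕ) (f : Params n L → ℝ) (W u v : Params n L) : ℝ :=
  fderiv ℝ (fun W' => fderiv ℝ f W' v) W u

/-- Euclidean dot product on the concatenated weight space. -/
def dot (n : ℕ → ℕ) (L : ℕ) (u v : Params n L) : ℝ :=
  ∑ k : Fin L, ∑ j : Fin (n k.1), ∑ i : Fin (n (k.1 + 1)), u k j i * v k j i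

/-- Squared Euclidean norm on the concatenated weight space. -/
def sqnorm (n : ℕ → ℕ) (L : ℕ) (u : Params n L) : ℝ := dot n L u u

/-- The Hessian–gradient quadratic form `gᵀ Ĥ g` of the network output. -/
noncomputable def gHg (n : ℕ → ℕ) (L : ℕ) (hL : 0 < n L) (x : Fin (n 0) → ℝ)
    (W : Params n L) : ℝ :=
  hess n L (F n L hL x) W (grad n L (F n L hL x) W) (grad n L (F n L hL x) W)

/-- Index type enumerating all individual weights. -/
abbrev Idx (n : ℕ → ℕ) (L : ℕ) := Σ k : Fin L, Fin (n k.1) × Fin (n (k.1 + 1))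

/-- The individual weight entry corresponding to an index. -/
def entry (n : ℕ → ℕ) (L : ℕ) (W : Params n L) (p : Idx n L) : ℝ := W p.1 p.2.1 p.2.2

end DLN

section Statement14Aux

open DLN

variable {n : ℕ → ℕ} {L : ℕ}

/-! ### Smoothness of the network output -/

lemma contDiff_coord (k : Fin L) (j : Fin (n k.1)) (i : Fin (n (k.1 + 1))) :
    ContDiff ℝ ⊤ (fun V : Params n L => V k j i) :=
  contDiff_pi.mp (contDiff_pi.mp (contDiff_pi.mp contDiff_id k) j) i

lemma contDiff_ext (l : ℕ) (j : Fin (n l)) (i : Fin (n (l + 1))) :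
    ContDiff ℝ ⊤ (fun V : Params n L => ext n L V l j i) := by
  unfold DLN.ext
  by_cases h : l < L
  · simp only [dif_pos h]
    exact contDiff_coord ⟨l, h⟩ j i
  · simp only [dif_neg h]
    exact contDiff_const

lemma contDiff_act (x : Fin (n 0) → ℝ) :
    ∀ (l : ℕ) (j : Fin (n l)), ContDiff ℝ ⊤ (fun V : Params n L => act n x (ext n L V) l j)
  | 0, _ => contDiff_const
  | (l + 1), i => by
      simp only [DLN.act]
      exact ContDiff.sum fun j _ => (contDiff_ext l j i).mul (contDiff_act x l j)

lemma contDiff_F (hL : 0 < n L) (x : Fin (n 0) → ℝ) : ContDiff ℝ ⊤ (F n L hL x) :=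
  contDiff_act x L ⟨0, hL⟩

/-! ### The sign-flip of the first layer -/

/-- sign: `-1` on layer `0`, `1` elsewhere. -/
def sgn (L : ℕ) (k : Fin L) : ℝ := if (k : ℕ) = 0 then -1 else 1

lemma sgn_mul_self (k : Fin L) : sgn L k * sgn L k = 1 := by
  unfold sgn; split <;> norm_num

/-- The linear involution flipping the sign of all layer-0 weights. -/
noncomputable def sigmaL (n : ℕ → ℕ) (L : ℕ) : Params n L →L[ℝ] Params n L :=
  ContinuousLinearMap.pi fun k => sgn L k • ContinuousLinearMap.proj k

lemma sigmaL_apply (V : Params n L) (k : Fin L) (j : Fin (n k.1)) (i : Fin (n (k.1 + 1))) :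
    sigmaL n L V k j i = sgn L k * V k j i := rfl

lemma sigmaL_invol (V : Params n L) : sigmaL n L (sigmaL n L V) = V := by
  funext k j i
  rw [sigmaL_apply, sigmaL_apply, ← mul_assoc, sgn_mul_self, one_mul]

lemma ext_sigma_ne (V : Params n L) {l : ℕ} (hl : l ≠ 0) :
    ext n L (sigmaL n L V) l = ext n L V l := by
  unfold DLN.ext
  split_ifs with h
  · funext j i
    rw [sigmaL_apply]
    simp [sgn, hl]
  · rfl

lemma ext_sigma_zero (hL1 : 0 < L) (V : Params n L) (j : Fin (n 0)) (i : Fin (n 1)) :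
    ext n L (sigmaL n L V) 0 j i = - ext n L V 0 j i := by
  unfold DLN.ext
  rw [dif_pos hL1, dif_pos hL1, sigmaL_apply]
  simp [sgn]

lemma act_sigma (hL1 : 0 < L) (x : Fin (n 0) → ℝ) (V : Params n L) :
    ∀ l, l ≠ 0 → ∀ j : Fin (n l),
      act n x (ext n L (sigmaL n L V)) l j = - act n x (ext n L V) l j := by
  intro l
  induction l with
  | zero => intro h; exact absurd rfl h
  | succ l ih =>
    intro _ i
    rcases Nat.eq_zero_or_pos l with h0 | hl
    · subst h0
      simp only [DLN.act]
      rw [← Finset.sum_neg_distrib]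
      exact Finset.sum_congr rfl fun j _ => by rw [ext_sigma_zero hL1, neg_mul]
    · simp only [DLN.act]
      rw [← Finset.sum_neg_distrib]
      refine Finset.sum_congr rfl fun j _ => ?_
      rw [ext_sigma_ne V hl.ne', ih hl.ne' j, mul_neg]

lemma F_sigma (hL1 : 0 < L) (hL : 0 < n L) (x : Fin (n 0) → ℝ) (V : Params n L) :
    F n L hL x (sigmaL n L V) = - F n L hL x V :=
  act_sigma hL1 x V L hL1.ne' ⟨0, hL⟩

/-! ### Derivative consequences of oddness -/

variable {f g : Params n L → ℝ}

lemma fderiv_sigma (hf : ContDiff ℝ ⊤ f) (hodd : ∀ V, f (sigmaL n L V) = - f V)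
    (V u : Params n L) :
    fderiv ℝ f (sigmaL n L V) u = - fderiv ℝ f V (sigmaL n L u) := by
  have hcomp : fderiv ℝ (f ∘ ⇑(sigmaL n L)) V
      = (fderiv ℝ f (sigmaL n L V)).comp (sigmaL n L) := by
    rw [fderiv_comp V (hf.differentiable (by simp) _) (sigmaL n L).differentiableAt,
      (sigmaL n L).fderiv]
  have h2 : (f ∘ ⇑(sigmaL n L)) = fun W => - f W := funext fun W => hodd W
  have h3 : fderiv ℝ (f ∘ ⇑(sigmaL n L)) V = - fderiv ℝ f V := by
    rw [h2]; exact fderiv_fun_neg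
  have h4 := congrArg (fun φ : Params n L →L[ℝ] ℝ => φ (sigmaL n L u)) (hcomp.symm.trans h3)
  simpa [sigmaL_invol] using h4

lemma contDiff_fderiv_apply (hf : ContDiff ℝ ⊤ f) (v : Params n L) :
    ContDiff ℝ ⊤ (fun V => fderiv ℝ f V v) :=
  (ContinuousLinearMap.apply ℝ ℝ v).contDiff.comp (hf.fderiv_right le_top)

lemma hess_sigma (hf : ContDiff ℝ ⊤ f) (hodd : ∀ V, f (sigmaL n L V) = - f V)
    (V u v : Params n L) :
    hess n L f (sigmaL n L V) u v = - hess n L f V (sigmaL n L u) (sigmaL n L v) := by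
  have hDdiff : Differentiable ℝ (fun W => fderiv ℝ f W v) :=
    (contDiff_fderiv_apply hf v).differentiable (by simp)
  have hcomp : fderiv ℝ ((fun W => fderiv ℝ f W v) ∘ ⇑(sigmaL n L)) V
      = (fderiv ℝ (fun W => fderiv ℝ f W v) (sigmaL n L V)).comp (sigmaL n L) := by
    rw [fderiv_comp V (hDdiff _) (sigmaL n L).differentiableAt, (sigmaL n L).fderiv]
  have h2 : ((fun W => fderiv ℝ f W v) ∘ ⇑(sigmaL n L))
      = fun W => - fderiv ℝ f W (sigmaL n L v) :=
    funext fun W => fderiv_sigma hf hodd W v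
  have h4 : fderiv ℝ ((fun W => fderiv ℝ f W v) ∘ ⇑(sigmaL n L)) V
      = - fderiv ℝ (fun W => fderiv ℝ f W (sigmaL n L v)) V := by
    rw [h2]; exact fderiv_fun_neg
  have h5 := congrArg (fun φ : Params n L →L[ℝ] ℝ => φ (sigmaL n L u)) (hcomp.symm.trans h4)
  simp only [ContinuousLinearMap.coe_comp', Function.comp_apply, ContinuousLinearMap.neg_apply,
    sigmaL_invol] at h5
  exact h5

lemma sigma_basis (k : Fin L) (j : Fin (n k.1)) (i : Fin (n (k.1 + 1))) :
    sigmaL n L (basis n L k j i) = sgn L k • basis n L k j i := by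
  funext k' j' i'
  rw [sigmaL_apply]
  by_cases h : k' = k
  · subst h; rfl
  · have : basis n L k j i k' = 0 := Pi.single_eq_of_ne h _
    simp [this]

lemma grad_sigma (hf : ContDiff ℝ ⊤ f) (hodd : ∀ V, f (sigmaL n L V) = - f V)
    (V : Params n L) :
    sigmaL n L (grad n L f (sigmaL n L V)) = - grad n L f V := by
  funext k j i
  rw [sigmaL_apply]
  show sgn L k * grad n L f (sigmaL n L V) k j i = - grad n L f V k j i
  unfold DLN.grad
  rw [fderiv_sigma hf hodd, sigma_basis, ContinuousLinearMap.map_smul, smul_eq_mul, mul_neg,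
    ← mul_assoc, sgn_mul_self, one_mul]

lemma hess_neg_neg (V u : Params n L) :
    hess n L f V (-u) (-u) = hess n L f V u u := by
  unfold DLN.hess
  have h1 : (fun W' => fderiv ℝ f W' (-u)) = fun W' => -(fderiv ℝ f W' u) :=
    funext fun W => (fderiv ℝ f W).map_neg u
  rw [h1, fderiv_fun_neg]
  simp

lemma gHg_sigma (hL1 : 0 < L) (hL : 0 < n L) (xv xu : Fin (n 0) → ℝ) (V : Params n L) :
    hess n L (F n L hL xv) (sigmaL n L V)
      (grad n L (F n L hL xu) (sigmaL n L V)) (grad n L (F n L hL xu) (sigmaL n L V))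
    = - hess n L (F n L hL xv) V
        (grad n L (F n L hL xu) V) (grad n L (F n L hL xu) V) := by
  have hfv := contDiff_F hL xv
  have hfu := contDiff_F hL xu
  have hov : ∀ V, F n L hL xv (sigmaL n L V) = - F n L hL xv V := F_sigma hL1 hL xv
  have hou : ∀ V, F n L hL xu (sigmaL n L V) = - F n L hL xu V := F_sigma hL1 hL xu
  rw [hess_sigma hfv hov, grad_sigma hfu hou, hess_neg_neg]

/-! ### Continuity of the quadratic form -/

lemma hess_eq (hf : ContDiff ℝ ⊤ f) (V u v : Params n L) :
    hess n L f V u v = (fderiv ℝ (fderiv ℝ f) V u) v := by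
  unfold DLN.hess
  have h1 : (fun W' => fderiv ℝ f W' v)
      = (ContinuousLinearMap.apply ℝ ℝ v) ∘ (fderiv ℝ f) := rfl
  rw [h1, fderiv_comp V (ContinuousLinearMap.apply ℝ ℝ v).differentiableAt
    ((hf.fderiv_right (m := ⊤) le_top).differentiable (by simp) V), ContinuousLinearMap.fderiv]
  rfl

lemma continuous_gHg (hf : ContDiff ℝ ⊤ f) (hg : ContDiff ℝ ⊤ g) :
    Continuous fun V : Params n L => hess n L f V (grad n L g V) (grad n L g V) := by
  have h2 : Continuous (fderiv ℝ (fderiv ℝ f)) :=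
    ((hf.fderiv_right (m := ⊤) le_top).fderiv_right (m := ⊤) le_top).continuous
  have hgrad : Continuous (fun V => grad n L g V) := by
    refine continuous_pi fun k => continuous_pi fun j => continuous_pi fun i => ?_
    exact (hg.fderiv_right (m := ⊤) le_top).continuous.clm_apply continuous_const
  have he : (fun V : Params n L => hess n L f V (grad n L g V) (grad n L g V))
      = fun V => (fderiv ℝ (fderiv ℝ f) V (grad n L g V)) (grad n L g V) :=
    funext fun V => hess_eq hf V _ _
  rw [he]
  exact (h2.clm_apply hgrad).clm_apply hgrad

end Statement14Aux



/-- For a deep linear network with i.i.d. symmetric weights and two fixed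
inputs `x_u, x_v`, the gradient `g^u` of the output at input `x_u` and the Hessian `Ĥ^v` of the
output at input `x_v` satisfy `E[(g^u)ᵀ Ĥ^v g^u] = 0`. -/
theorem statement14
    (n : ℕ → ℕ) (L : ℕ) (hNL : n L = 1) (xu xv : Fin (n 0) → ℝ)
    (Ω : Type) [MeasurableSpace Ω] (μ : Measure Ω) [IsProbabilityMeasure μ]
    (W : Ω → DLN.Params n L)
    (hmeas : ∀ p : DLN.Idx n L, Measurable fun ω => DLN.entry n L (W ω) p)
    (ν : Measure ℝ) [IsProbabilityMeasure ν]
    (hsym : Measure.map (fun t : ℝ => -t) ν = ν)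
    (hmom : ∀ m : ℕ, Integrable (fun t : ℝ => t ^ m) ν)
    (hindep : iIndepFun (fun p ω => DLN.entry n L (W ω) p) μ)
    (hlaw : ∀ p : DLN.Idx n L, Measure.map (fun ω => DLN.entry n L (W ω) p) μ = ν) :
    ∫ ω, DLN.hess n L (DLN.F n L (by omega) xv) (W ω)
        (DLN.grad n L (DLN.F n L (by omega) xu) (W ω))
        (DLN.grad n L (DLN.F n L (by omega) xu) (W ω)) ∂μ = 0 := by
  have hL : 0 < n L := by omega
  rcases Nat.eq_zero_or_pos L with h0 | hL1
  · -- With no layers the output is constant, so the Hessian vanishes.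
    subst h0
    have hzero : ∀ V u v : DLN.Params n 0,
        DLN.hess n 0 (DLN.F n 0 hL xv) V u v = 0 := by
      intro V u v
      have hFc : DLN.F n 0 hL xv = fun _ => xv ⟨0, hL⟩ := rfl
      unfold DLN.hess
      rw [hFc]
      have h1 : (fun W' : DLN.Params n 0 =>
          fderiv ℝ (fun _ : DLN.Params n 0 => xv ⟨0, hL⟩) W' v) = fun _ => 0 := by
        funext W'
        rw [fderiv_const_apply]
        rfl
      rw [h1]
      have h2 : fderiv ℝ (fun _ : DLN.Params n 0 => (0 : ℝ)) V = 0 := fderiv_const_apply 0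
      rw [h2]
      rfl
    simp only [hzero]
    exact integral_zero _ _
  · -- At least one layer: flip the signs of the first-layer weights.
    set Φ : DLN.Params n L → ℝ := fun V =>
      DLN.hess n L (DLN.F n L hL xv) V
        (DLN.grad n L (DLN.F n L hL xu) V) (DLN.grad n L (DLN.F n L hL xu) V) with hΦ
    show ∫ ω, Φ (W ω) ∂μ = 0
    have hΦc : Continuous Φ := continuous_gHg (contDiff_F hL xv) (contDiff_F hL xu)
    have hΦodd : ∀ V, Φ (sigmaL n L V) = - Φ V := fun V => gHg_sigma hL1 hL xv xu V
    -- the joint law of the weights is the product measure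
    set T : Ω → (DLN.Idx n L → ℝ) := fun ω p => DLN.entry n L (W ω) p with hTdef
    have hT : Measurable T := measurable_pi_lambda _ hmeas
    set π : Measure (DLN.Idx n L → ℝ) := Measure.pi fun _ => ν with hπ
    have hmapT : Measure.map T μ = π := by
      refine (Measure.pi_eq fun s hs => ?_).symm
      rw [Measure.map_apply hT (MeasurableSet.univ_pi hs)]
      have hpre : T ⁻¹' (Set.pi Set.univ s)
          = ⋂ p ∈ Finset.univ, (fun ω => DLN.entry n L (W ω) p) ⁻¹' (s p) := by
        ext ω
        simp [hTdef, Set.mem_pi]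
      rw [hpre, hindep.measure_inter_preimage_eq_mul Finset.univ (fun p _ => hs p)]
      refine Finset.prod_congr rfl fun p _ => ?_
      rw [← hlaw p, Measure.map_apply (hmeas p) (hs p)]
    -- reconstruction of the parameters from the coordinate vector
    set e : (DLN.Idx n L → ℝ) → DLN.Params n L := fun y k j i => y ⟨k, (j, i)⟩ with hedef
    have he : Continuous e :=
      continuous_pi fun k => continuous_pi fun j => continuous_pi fun i => continuous_apply _
    have heW : ∀ ω, e (T ω) = W ω := fun ω => rfl
    -- the coordinatewise sign flip preserves the product measure
    set τ : (DLN.Idx n L → ℝ) → (DLN.Idx n L → ℝ) := fun y p => sgn L p.1 * y p with hτdef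
    have hτe : ∀ y, e (τ y) = sigmaL n L (e y) := by
      intro y
      funext k j i
      rw [sigmaL_apply]
    have hcoord : ∀ p : DLN.Idx n L, MeasurePreserving (fun t : ℝ => sgn L p.1 * t) ν ν := by
      intro p
      by_cases h : (p.1 : ℕ) = 0
      · have hfun : (fun t : ℝ => sgn L p.1 * t) = fun t : ℝ => -t := by
          funext t
          simp [sgn, h]
        rw [hfun]
        exact ⟨measurable_neg, hsym⟩
      · have hfun : (fun t : ℝ => sgn L p.1 * t) = id := by
          funext t
          simp [sgn, h]
        rw [hfun]
        exact MeasurePreserving.id ν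
    have hτpres : MeasurePreserving τ π π :=
      measurePreserving_pi (fun _ => ν) (fun _ => ν) hcoord
    have hint : ∫ ω, Φ (W ω) ∂μ = ∫ y, (Φ ∘ e) y ∂π := by
      have h1 : (fun ω => Φ (W ω)) = fun ω => (Φ ∘ e) (T ω) :=
        funext fun ω => by rw [Function.comp_apply, heW]
      rw [h1, ← integral_map hT.aemeasurable ((hΦc.comp he).aestronglyMeasurable), hmapT]
    have key : ∫ y, (Φ ∘ e) y ∂π = - ∫ y, (Φ ∘ e) y ∂π := by
      conv_lhs => rw [← hτpres.map_eq]
      rw [integral_map hτpres.measurable.aemeasurable ((hΦc.comp he).aestronglyMeasurable)]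
      calc ∫ y, (Φ ∘ e) (τ y) ∂π = ∫ y, - (Φ ∘ e) y ∂π := by
            refine integral_congr_ae (Filter.Eventually.of_forall fun y => ?_)
            simp only [Function.comp_apply]
            rw [hτe, hΦodd]
        _ = - ∫ y, (Φ ∘ e) y ∂π := integral_neg _
    rw [hint]
    linarith [key]
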